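/- The function F(β) = (1+β)(√6·β + √6 + 6)/(2β((3−√6)β − √6 + 6)) is strictly decreasing for β ∈ (1,2], and F(2) = 3(7+3√6)/20. -/

import Mathlib

theorem stmt_13
    (F : ℝ → ℝ)
    (hF : ∀ β : ℝ, F β = (1 + β) * (Real.sqrt 6 * β + Real.sqrt 6 + 6)
      / (2 * β * ((3 - Real.sqrt 6) * β - Real.sqrt 6 + 6))) :
    StrictAntiOn F (Set.Ioc 1 2) ∧ F 2 = 3 * (7 + 3 * Real.sqrt 6) / 20 := by
  have hs2 : Real.sqrt 6 ^ 2 = 6 := Real.sq_sqrt (by norm_num)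
  have hsl : (2 : ℝ) < Real.sqrt 6 := by
    nlinarith [Real.sqrt_nonneg 6, hs2]
  have hsu : Real.sqrt 6 < 2.5 := by
    nlinarith [Real.sqrt_nonneg 6, hs2]
  set s := Real.sqrt 6 with hsdef
  constructor
  · intro a ha b hb hab
    obtain ⟨ha1, ha2⟩ := ha
    obtain ⟨hb1, hb2⟩ := hb
    rw [hF a, hF b]
    have hDa : 0 < 2 * a * ((3 - s) * a - s + 6) := by
      nlinarith [mul_pos (show (0:ℝ) < 3 - s by linarith) (show (0:ℝ) < a - 1 by linarith)]
    have hDb : 0 < 2 * b * ((3 - s) * b - s + 6) := by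
      nlinarith [mul_pos (show (0:ℝ) < 3 - s by linarith) (show (0:ℝ) < b - 1 by linarith)]
    rw [div_lt_div_iff₀ hDb hDa]
    nlinarith [mul_pos (sub_pos.2 hab) (mul_pos (sub_pos.2 ha1) (sub_pos.2 hb1)),
      mul_pos (sub_pos.2 hab) (sub_pos.2 ha1), mul_pos (sub_pos.2 hab) (sub_pos.2 hb1),
      sq_nonneg (a - b), sq_nonneg (a + b), hs2, hsl, hsu]
  · rw [hF 2]
    have hd : 2 * 2 * ((3 - s) * 2 - s + 6) ≠ 0 := by nlinarith
    field_simp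
    rw [div_eq_iff (by nlinarith)]
    nlinarith [hs2]
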